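/- The spine Sp(n) of the standard n-simplex, i.e. the union of the edges Δ[1]{i, i+1} for 0 ≤ i ≤ n−1, has the property that the inclusion Sp(n) → Δ[n] is an inner anodyne map: it lies in the saturation of inner horn inclusions; in particular, every quasi-category X has the right lifting property with respect to Sp(n) → Δ[n]. -/

import Mathlib

open CategoryTheory Simplicial

universe u

/-- The spine `Sp(n)` of the standard `n`-simplex: the simplicial subset of `Δ[n]`
which is the union of the edges `Δ[1]{i, i+1}` for `0 ≤ i ≤ n-1`.  A simplex of `Δ[n]`
belongs to the spine iff all its vertices lie in some set `{i, i+1}`. -/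
def SSet.spineSubcomplex (n : ℕ) : SSet.{u} where
  obj l := { α : Δ[n].obj l //
    ∃ i : ℕ, ∀ b ∈ Set.range (SSet.stdSimplex.asOrderHom α), i ≤ (b : ℕ) ∧ (b : ℕ) ≤ i + 1 }
  map {l₁ l₂} f := TypeCat.ofHom fun α =>
    ⟨Δ[n].map f α.1, by
      obtain ⟨i, hi⟩ := α.2
      refine ⟨i, fun b hb => hi b ?_⟩
      obtain ⟨a, ha⟩ := hb
      exact ⟨f.unop.toOrderHom a, ha⟩⟩

/-- The inclusion `Sp(n) ⟶ Δ[n]` of the spine into the standard simplex. -/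
def SSet.spineSubcomplexInclusion (n : ℕ) : SSet.spineSubcomplex.{u} n ⟶ Δ[n] where
  app _ := TypeCat.ofHom fun α => α.1

namespace SpineProof

open SSet
open SSet.stdSimplex (asOrderHom)

variable {n : ℕ}

/-- Range of a simplex of `Δ[n]` as a `Finset`. -/
def rng {l : SimplexCategoryᵒᵖ} (α : Δ[n].obj l) : Finset (Fin (n + 1)) :=
  Finset.image (asOrderHom α) Finset.univ

lemma mem_rng {l : SimplexCategoryᵒᵖ} (α : Δ[n].obj l) (x : Fin (l.unop.len + 1)) :
    asOrderHom α x ∈ rng α := Finset.mem_image_of_mem _ (Finset.mem_univ x)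

lemma rng_subset_iff {l : SimplexCategoryᵒᵖ} (α : Δ[n].obj l)
    (S : Finset (Fin (n+1))) : rng α ⊆ S ↔ ∀ x, asOrderHom α x ∈ S := by
  constructor
  · intro h x; exact h (mem_rng α x)
  · intro h y hy
    obtain ⟨x, -, rfl⟩ := Finset.mem_image.mp hy
    exact h x

lemma asOrderHom_map {l l' : SimplexCategoryᵒᵖ} (f : l ⟶ l') (α : Δ[n].obj l) :
    asOrderHom (Δ[n].map f α) = (asOrderHom α).comp f.unop.toOrderHom := rfl

lemma rng_map_subset {l l' : SimplexCategoryᵒᵖ} (f : l ⟶ l') (α : Δ[n].obj l) :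
    rng (Δ[n].map f α) ⊆ rng α := by
  rw [rng_subset_iff]
  intro x
  exact mem_rng α (f.unop.toOrderHom x)

/-- The spine condition on a finset of vertices. -/
def Spn (S : Finset (Fin (n + 1))) : Prop :=
  ∃ i : ℕ, ∀ b ∈ S, i ≤ (b : ℕ) ∧ (b : ℕ) ≤ i + 1

/-- The condition for a simplex to belong to the spine subcomplex. -/
abbrev SpineCond {l : SimplexCategoryᵒᵖ} (α : Δ[n].obj l) : Prop :=
  ∃ i : ℕ, ∀ b ∈ Set.range (SSet.stdSimplex.asOrderHom α), i ≤ (b : ℕ) ∧ (b : ℕ) ≤ i + 1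

lemma spineCond_iff {l : SimplexCategoryᵒᵖ} (α : Δ[n].obj l) :
    SpineCond α ↔ Spn (rng α) := by
  unfold SpineCond Spn
  apply exists_congr; intro i
  constructor
  · intro h b hb
    obtain ⟨x, -, rfl⟩ := Finset.mem_image.mp hb
    exact h _ ⟨x, rfl⟩
  · intro h b hb
    obtain ⟨x, rfl⟩ := hb
    exact h _ (mem_rng α x)

/-- Extensionality for simplices of the standard simplex. -/
lemma simplex_ext {l : SimplexCategoryᵒᵖ} {α β : Δ[n].obj l}
    (h : ∀ x, asOrderHom α x = asOrderHom β x) : α = β := by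
  apply stdSimplex.objEquiv.injective
  apply SimplexCategory.Hom.ext
  exact OrderHom.ext _ _ (funext h)


variable {E B : SSet.{u}} (p : E ⟶ B) (u : spineSubcomplex.{u} n ⟶ E) (v : Δ[n] ⟶ B)

/-- A partial lift defined on the subcomplex of `Δ[n]` of simplices whose vertex set
satisfies `P`. -/
structure PLift (P : Finset (Fin (n + 1)) → Prop) : Type u where
  dc : ∀ {S T : Finset (Fin (n+1))}, S ⊆ T → P T → P S
  sp : ∀ S, Spn S → P S
  ell : ∀ {l : SimplexCategoryᵒᵖ} (α : Δ[n].obj l), P (rng α) → E.obj l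
  nat : ∀ {l l' : SimplexCategoryᵒᵖ} (f : l ⟶ l') (α : Δ[n].obj l)
    (h : P (rng α)) (h' : P (rng (Δ[n].map f α))),
    ell (Δ[n].map f α) h' = E.map f (ell α h)
  overB : ∀ {l : SimplexCategoryᵒᵖ} (α : Δ[n].obj l) (h : P (rng α)),
    p.app l (ell α h) = v.app l α
  ext : ∀ {l : SimplexCategoryᵒᵖ} (α : Δ[n].obj l) (hs : SpineCond α) (h : P (rng α)),
    ell α h = u.app l ⟨α, hs⟩

variable {p u v}

/-- Transport a partial lift along an equivalence of predicates. -/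
def PLift.ofIff {P P' : Finset (Fin (n+1)) → Prop} (hiff : ∀ S, P S ↔ P' S)
    (d : PLift p u v P) : PLift p u v P' where
  dc hST h := (hiff _).mp (d.dc hST ((hiff _).mpr h))
  sp S h := (hiff S).mp (d.sp S h)
  ell α h := d.ell α ((hiff _).mpr h)
  nat f α h h' := d.nat f α ((hiff _).mpr h) ((hiff _).mpr h')
  overB α h := d.overB α ((hiff _).mpr h)
  ext α hs h := d.ext α hs ((hiff _).mpr h)

/-- The base partial lift, defined on the spine. -/
def plBase (hsq : u ≫ p = spineSubcomplexInclusion n ≫ v) : PLift p u v (fun S => Spn S) where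
  dc hST h := by
    obtain ⟨i, hi⟩ := h
    exact ⟨i, fun b hb => hi b (hST hb)⟩
  sp _ h := h
  ell α h := u.app _ ⟨α, (spineCond_iff α).mpr h⟩
  nat f α h h' :=
    FunctorToTypes.naturality u f (⟨α, (spineCond_iff α).mpr h⟩ : (spineSubcomplex n).obj _)
  overB α h := by
    have := ConcreteCategory.congr_hom (congrFun (congrArg NatTrans.app hsq) _) (⟨α, (spineCond_iff α).mpr h⟩ : (spineSubcomplex n).obj _)
    exact this
  ext α hs h := rfl


section EXT
open SSet
variable {n : ℕ} {E B : SSet.{u}} {p : E ⟶ B} {u : SSet.spineSubcomplex.{u} n ⟶ E} {v : Δ[n] ⟶ B}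

lemma PLift.extend {P : Finset (Fin (n+1)) → Prop} (d : PLift p u v P)
    (hp : ∀ (m : ℕ) (k : Fin (m + 1)), 0 < (k : ℕ) → (k : ℕ) < m →
      HasLiftingProperty (SSet.horn m k).ι p)
    (R : Finset (Fin (n + 1))) (k' : Fin (n+1)) (hk' : k' ∈ R)
    (hlt : ∃ a ∈ R, a < k') (hgt : ∃ b ∈ R, k' < b)
    (h3 : ∀ x ∈ R, x ≠ k' → P (R.erase x))
    (h4 : ¬ P R) (h5 : ¬ P (R.erase k')) :
    Nonempty (PLift p u v (fun S => P S ∨ S ⊆ R)) := by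
  classical
  obtain ⟨m, hm⟩ : ∃ m, R.card = m + 1 :=
    ⟨R.card - 1, (Nat.succ_pred_eq_of_pos (Finset.card_pos.mpr ⟨k', hk'⟩)).symm⟩
  set σ : Fin (m+1) ≃o R := R.orderIsoOfFin hm with hσ
  let ρ : (⦋m⦌ : SimplexCategory) ⟶ ⦋n⦌ :=
    SimplexCategory.Hom.mk ⟨fun j => ((σ j : R) : Fin (n+1)),
      fun a b hab => Subtype.coe_le_coe.mpr (σ.monotone hab)⟩
  let g : Δ[m] ⟶ Δ[n] := SSet.stdSimplex.map ρ
  have hg : ∀ {l : SimplexCategoryᵒᵖ} (β : Δ[m].obj l) (x : Fin (l.unop.len + 1)),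
      asOrderHom (g.app l β) x = ((σ (asOrderHom β x) : R) : Fin (n+1)) := fun β x => rfl
  set pos : Fin (m+1) := σ.symm ⟨k', hk'⟩ with hpos
  have hσpos : ((σ pos : R) : Fin (n+1)) = k' := by
    rw [hpos, OrderIso.apply_symm_apply]
  have h0 : 0 < (pos : ℕ) := by
    obtain ⟨a, haR, ha⟩ := hlt
    have h1 : σ.symm ⟨a, haR⟩ < pos := by
      rw [hpos]; exact σ.symm.strictMono (Subtype.mk_lt_mk.mpr ha)
    have := Fin.lt_iff_val_lt_val.mp h1
    omega
  have hposm : (pos : ℕ) < m := by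
    obtain ⟨b, hbR, hb⟩ := hgt
    have h1 : pos < σ.symm ⟨b, hbR⟩ := by
      rw [hpos]; exact σ.symm.strictMono (Subtype.mk_lt_mk.mpr hb)
    have h2 := Fin.lt_iff_val_lt_val.mp h1
    have h3 := (σ.symm ⟨b, hbR⟩).isLt
    omega
  -- every horn simplex maps into the P-part
  have hornP : ∀ {l : SimplexCategoryᵒᵖ} (b : Λ[m, pos].obj l), P (rng (g.app l b.1)) := by
    intro l b
    have hb := b.2
    have hex : ∃ j : Fin (m+1), j ∉ Set.range (asOrderHom b.1) ∧ j ≠ pos := by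
      by_contra hc
      push_neg at hc
      apply hb
      rw [Set.eq_univ_iff_forall]
      intro j
      by_cases hj : j ∈ Set.range (asOrderHom b.1)
      · exact Or.inl hj
      · exact Or.inr (hc j hj)
    obtain ⟨j, hj1, hj2⟩ := hex
    have hne : ((σ j : R) : Fin (n+1)) ≠ k' := by
      intro he
      exact hj2 (σ.injective (Subtype.ext (he.trans hσpos.symm)) |>.symm ▸ rfl)
    refine d.dc ?_ (h3 ((σ j : R) : Fin (n+1)) (σ j).2 hne)
    rw [rng_subset_iff]
    intro x
    rw [Finset.mem_erase]
    constructor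
    · rw [hg]
      intro he
      exact hj1 ⟨x, σ.injective (Subtype.ext he)⟩
    · rw [hg]; exact (σ (asOrderHom b.1 x)).2
  -- the horn map
  have keynat : ∀ {l l' : SimplexCategoryᵒᵖ} (f : l ⟶ l') (x : Δ[m].obj l)
      (h : P (rng (g.app l x))) (h' : P (rng (g.app l' (Δ[m].map f x)))),
      d.ell (g.app l' (Δ[m].map f x)) h' = E.map f (d.ell (g.app l x) h) := by
    intro l l' f x h h'
    have e : g.app l' (Δ[m].map f x) = Δ[n].map f (g.app l x) :=
      rfl
    revert h'
    rw [e]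
    intro h'
    exact d.nat f _ h h'
  let H : (Λ[m, pos] : SSet) ⟶ E :=
    { app := fun l => TypeCat.ofHom fun b => d.ell (g.app l b.1) (hornP b)
      naturality := by
        intro l l' f
        ext b
        exact keynat f b.1 (hornP b) (hornP ((Λ[m, pos] : SSet).map f b)) }
  have hsq2 : CommSq H (horn m pos).ι p (g ≫ v) := by
    constructor
    apply SSet.hom_ext
    intro l
    ext b
    exact d.overB (g.app l b.1) (hornP b)
  haveI := hp m pos h0 hposm
  haveI : hsq2.HasLift := HasLiftingProperty.sq_hasLift hsq2
  set LR := hsq2.lift with hLR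
  have facL : (horn m pos).ι ≫ LR = H := hsq2.fac_left
  have facR : LR ≫ p = g ≫ v := hsq2.fac_right
  -- factorisation of simplices with range in R
  let fact : ∀ {l : SimplexCategoryᵒᵖ} (α : Δ[n].obj l), rng α ⊆ R → Δ[m].obj l :=
    fun {l} α hsub => stdSimplex.objMk
      ⟨fun x => σ.symm ⟨asOrderHom α x, (rng_subset_iff α R).mp hsub x⟩,
       fun a b hab => σ.symm.monotone (Subtype.mk_le_mk.mpr ((asOrderHom α).monotone hab))⟩
  have hfact : ∀ {l : SimplexCategoryᵒᵖ} (α : Δ[n].obj l) (hsub : rng α ⊆ R),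
      g.app l (fact α hsub) = α := by
    intro l α hsub
    apply simplex_ext
    intro x
    rw [hg]
    show ((σ (σ.symm ⟨asOrderHom α x, _⟩) : R) : Fin (n+1)) = asOrderHom α x
    rw [OrderIso.apply_symm_apply]
  have horncond : ∀ {l : SimplexCategoryᵒᵖ} (α : Δ[n].obj l) (hsub : rng α ⊆ R),
      P (rng α) → Set.range (asOrderHom (fact α hsub)) ∪ {pos} ≠ Set.univ := by
    intro l α hsub hP hc
    have hRsub : R ⊆ insert k' (rng α) := by
      intro y hy
      rw [Set.eq_univ_iff_forall] at hc
      rcases hc (σ.symm ⟨y, hy⟩) with hin | hj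
      · obtain ⟨x, hx⟩ := hin
        have hx' := congrArg (fun t => ((σ t : R) : Fin (n+1))) hx
        simp only [show asOrderHom (fact α hsub) x
            = σ.symm ⟨asOrderHom α x, (rng_subset_iff α R).mp hsub x⟩ from rfl,
          OrderIso.apply_symm_apply] at hx'
        exact Finset.mem_insert.mpr (Or.inr (hx' ▸ mem_rng α x))
      · have : (⟨y, hy⟩ : R) = ⟨k', hk'⟩ := σ.symm.injective (by simpa [hpos] using hj)
        exact Finset.mem_insert.mpr (Or.inl (congrArg Subtype.val this))
    by_cases hk : k' ∈ rng α
    · apply h4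
      have : rng α = R := Finset.Subset.antisymm hsub (fun y hy => by
        rcases Finset.mem_insert.mp (hRsub hy) with h | h
        · exact h ▸ hk
        · exact h)
      exact this ▸ hP
    · apply h5
      have : rng α = R.erase k' := by
        apply Finset.Subset.antisymm
        · exact fun y hy => Finset.mem_erase.mpr ⟨fun he => hk (he ▸ hy), hsub hy⟩
        · intro y hy
          obtain ⟨hne, hyR⟩ := Finset.mem_erase.mp hy
          rcases Finset.mem_insert.mp (hRsub hyR) with h | h
          · exact absurd h hne
          · exact h
      exact this ▸ hP
  have bridge : ∀ {l : SimplexCategoryᵒᵖ} (α : Δ[n].obj l) (hsub : rng α ⊆ R)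
      (hP : P (rng α)), LR.app l (fact α hsub) = d.ell α hP := by
    intro l α hsub hP
    have e1 : LR.app l (fact α hsub)
        = d.ell (g.app l (fact α hsub)) (hornP ⟨fact α hsub, horncond α hsub hP⟩) :=
      ConcreteCategory.congr_hom (congrArg (fun (T : (Λ[m, pos] : SSet) ⟶ E) => T.app l) facL)
        ⟨fact α hsub, horncond α hsub hP⟩
    have e2 : ∀ (x : Δ[n].obj l) (hx : P (rng x)), x = α → d.ell x hx = d.ell α hP := by
      rintro x hx rfl; rfl
    exact e1.trans (e2 _ _ (hfact α hsub))
  have factmap : ∀ {l l' : SimplexCategoryᵒᵖ} (f : l ⟶ l') (α : Δ[n].obj l)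
      (hsub : rng α ⊆ R) (hsub' : rng (Δ[n].map f α) ⊆ R),
      fact (Δ[n].map f α) hsub' = Δ[m].map f (fact α hsub) := by
    intro l l' f α hsub hsub'
    apply simplex_ext
    intro x
    show σ.symm _ = σ.symm _
    rfl
  refine ⟨{ dc := ?_, sp := ?_,
            ell := fun {l} α h =>
              if hP : P (rng α) then d.ell α hP else LR.app l (fact α (h.resolve_left hP)),
            nat := ?_, overB := ?_, ext := ?_ }⟩
  · rintro S T hST (hP | hTR)
    · exact Or.inl (d.dc hST hP)
    · exact Or.inr (hST.trans hTR)
  · exact fun S h => Or.inl (d.sp S h)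
  · intro l l' f α h h'
    by_cases hP : P (rng α)
    · have hP' : P (rng (Δ[n].map f α)) := d.dc (rng_map_subset f α) hP
      simp only [dif_pos hP, dif_pos hP']
      exact d.nat f α hP hP'
    · have hsub : rng α ⊆ R := h.resolve_left hP
      have hsub' : rng (Δ[n].map f α) ⊆ R := (rng_map_subset f α).trans hsub
      by_cases hP' : P (rng (Δ[n].map f α))
      · simp only [dif_pos hP', dif_neg hP]
        rw [← bridge _ hsub' hP', factmap f α hsub hsub']
        exact FunctorToTypes.naturality LR f (fact α hsub)
      · simp only [dif_neg hP, dif_neg hP']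
        have e2 : ∀ (x : Δ[m].obj l') (hx : x = Δ[m].map f (fact α hsub)),
            LR.app l' x = LR.app l' (Δ[m].map f (fact α hsub)) := by
          rintro x rfl; rfl
        rw [e2 _ (factmap f α hsub hsub')]
        exact FunctorToTypes.naturality LR f (fact α hsub)
  · intro l α h
    by_cases hP : P (rng α)
    · simp only [dif_pos hP]; exact d.overB α hP
    · simp only [dif_neg hP]
      have hsub : rng α ⊆ R := h.resolve_left hP
      have e1 : p.app l (LR.app l (fact α hsub)) = v.app l (g.app l (fact α hsub)) :=
        ConcreteCategory.congr_hom (congrArg (fun (T : Δ[m] ⟶ B) => T.app l) facR) (fact α hsub)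
      rw [e1, hfact α hsub]
  · intro l α hs h
    have hP : P (rng α) := d.sp _ ((spineCond_iff α).mp hs)
    simp only [dif_pos hP]
    exact d.ext α hs hP
end EXT
section IND
open SSet
variable {n : ℕ} {E B : SSet.{u}} {p : E ⟶ B} {u : SSet.spineSubcomplex.{u} n ⟶ E} {v : Δ[n] ⟶ B}

/-- predicate: all vertices `≤ M`, or spine -/
def PM (M : ℕ) (S : Finset (Fin (n + 1))) : Prop :=
  Spn S ∨ ∀ x ∈ S, (x : ℕ) ≤ M

/-- A "good" set at level `M`: vertices `≤ M+1`, containing `M`, `M+1` and something `< M`. -/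
def good (M : ℕ) (R : Finset (Fin (n + 1))) : Prop :=
  (∀ x ∈ R, (x : ℕ) ≤ M + 1) ∧ (∃ x ∈ R, (x : ℕ) < M) ∧
    (∃ x ∈ R, (x : ℕ) = M) ∧ (∃ x ∈ R, (x : ℕ) = M + 1)

def QB (M c : ℕ) (S : Finset (Fin (n + 1))) : Prop :=
  PM M S ∨ ∃ R, good M R ∧ R.card ≤ c ∧ S ⊆ R

lemma not_spn {S : Finset (Fin (n+1))} {a b : Fin (n + 1)} (ha : a ∈ S) (hb : b ∈ S)
    (h : (a : ℕ) + 2 ≤ (b : ℕ)) : ¬ Spn S := by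
  rintro ⟨i, hi⟩
  have h1 := hi a ha
  have h2 := hi b hb
  omega

lemma good_card {M : ℕ} {R : Finset (Fin (n+1))} (h : good M R) : 3 ≤ R.card := by
  obtain ⟨-, ⟨a, ha, ha'⟩, ⟨x, hx, hx'⟩, ⟨b, hb, hb'⟩⟩ := h
  have hab : a ≠ x := fun he => by rw [he] at ha'; omega
  have hxb : x ≠ b := fun he => by rw [he] at hx'; omega
  have hab2 : a ≠ b := fun he => by rw [he] at ha'; omega
  have : {a, x, b} ⊆ R := by
    intro y hy
    simp only [Finset.mem_insert, Finset.mem_singleton] at hy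
    rcases hy with rfl | rfl | rfl <;> assumption
  calc 3 = ({a, x, b} : Finset (Fin (n+1))).card := by
        rw [Finset.card_insert_of_notMem (by simp [hab, hab2]),
          Finset.card_insert_of_notMem (by simp [hxb]), Finset.card_singleton]
      _ ≤ R.card := Finset.card_le_card this

lemma stepC (hp : ∀ (m : ℕ) (k : Fin (m + 1)), 0 < (k : ℕ) → (k : ℕ) < m →
      HasLiftingProperty (SSet.horn m k).ι p)
    (M c : ℕ) (d : PLift p u v (QB M c)) (F : Finset (Finset (Fin (n + 1))))
    (hF : ∀ R ∈ F, good M R ∧ R.card = c + 1) :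
    Nonempty (PLift p u v (fun S => QB M c S ∨ ∃ R ∈ F, S ⊆ R)) := by
  classical
  induction F using Finset.induction_on with
  | empty =>
    refine ⟨d.ofIff (fun S => ?_)⟩
    simp
  | @insert R F hRF ih =>
    obtain ⟨d'⟩ := ih (fun R' h => hF R' (Finset.mem_insert_of_mem h))
    obtain ⟨hgood, hcard⟩ := hF R (Finset.mem_insert_self R F)
    obtain ⟨hle, ⟨a, haR, ha⟩, ⟨k', hk', hkM⟩, ⟨b, hbR, hb⟩⟩ := hgood
    have hcontra : ∀ {S : Finset (Fin (n+1))}, a ∈ S → b ∈ S → ¬ Spn S :=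
      fun ha' hb' => not_spn ha' hb' (by omega)
    -- h3
    have h3 : ∀ x ∈ R, x ≠ k' → (QB M c (R.erase x) ∨ ∃ R' ∈ F, R.erase x ⊆ R') := by
      intro x hx hxk
      by_cases hxb : (x : ℕ) = M + 1
      · refine Or.inl (Or.inl (Or.inr ?_))
        intro y hy
        obtain ⟨hyx, hyR⟩ := Finset.mem_erase.mp hy
        have := hle y hyR
        rcases Nat.lt_or_ge (y : ℕ) (M + 1) with h | h
        · omega
        · exact absurd (Fin.ext (by omega : (y:ℕ) = (x:ℕ))) hyx
      · have hxM : (x : ℕ) ≠ M := fun he => hxk (Fin.ext (he.trans hkM.symm))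
        have hxlt : (x : ℕ) < M := by
          have := hle x hx; omega
        by_cases hone : ∀ y ∈ R, (y : ℕ) < M → y = x
        · refine Or.inl (Or.inl (Or.inl ⟨M, ?_⟩))
          intro y hy
          obtain ⟨hyx, hyR⟩ := Finset.mem_erase.mp hy
          have h1 := hle y hyR
          rcases Nat.lt_or_ge (y : ℕ) M with h | h
          · exact absurd (hone y hyR h) hyx
          · omega
        · push_neg at hone
          obtain ⟨y, hyR, hyM, hyx⟩ := hone
          refine Or.inl (Or.inr ⟨R.erase x, ⟨?_, ⟨y, ?_, hyM⟩, ⟨k', ?_, hkM⟩, ⟨b, ?_, hb⟩⟩,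
            ?_, Finset.Subset.refl _⟩)
          · exact fun z hz => hle z (Finset.mem_of_mem_erase hz)
          · exact Finset.mem_erase.mpr ⟨hyx, hyR⟩
          · exact Finset.mem_erase.mpr ⟨fun he => hxk he.symm, hk'⟩
          · exact Finset.mem_erase.mpr ⟨fun he => hxb (he ▸ hb), hbR⟩
          · rw [Finset.card_erase_of_mem hx, hcard]; omega
    have h3' : ∀ x ∈ R, x ≠ k' → (QB M c (R.erase x) ∨ ∃ R' ∈ F, R.erase x ⊆ R') := h3
    -- h4
    have h4 : ¬ (QB M c R ∨ ∃ R' ∈ F, R ⊆ R') := by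
      rintro (((hsp | hall) | ⟨R', hgood', hc', hsub⟩) | ⟨R', hR'F, hsub⟩)
      · exact hcontra haR hbR hsp
      · have := hall b hbR; omega
      · have := Finset.card_le_card hsub
        omega
      · have hc' := (hF R' (Finset.mem_insert_of_mem hR'F)).2
        have := Finset.eq_of_subset_of_card_le hsub (by omega)
        exact hRF (this ▸ hR'F)
    -- h5
    have hbk : b ∈ R.erase k' :=
      Finset.mem_erase.mpr ⟨fun he => by rw [he] at hb; omega, hbR⟩
    have hak : a ∈ R.erase k' :=
      Finset.mem_erase.mpr ⟨fun he => by rw [he] at ha; omega, haR⟩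
    have h5 : ¬ (QB M c (R.erase k') ∨ ∃ R' ∈ F, R.erase k' ⊆ R') := by
      have hRsub : ∀ R' : Finset (Fin (n+1)), good M R' → R.erase k' ⊆ R' → R ⊆ R' := by
        intro R' hg' hsub y hy
        by_cases hyk : y = k'
        · obtain ⟨x, hx, hxM⟩ := hg'.2.2.1
          have : x = k' := Fin.ext (hxM.trans hkM.symm)
          exact hyk ▸ this ▸ hx
        · exact hsub (Finset.mem_erase.mpr ⟨hyk, hy⟩)
      rintro (((hsp | hall) | ⟨R', hgood', hc', hsub⟩) | ⟨R', hR'F, hsub⟩)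
      · exact hcontra hak hbk hsp
      · have := hall b hbk; omega
      · have := Finset.card_le_card (hRsub R' hgood' hsub)
        omega
      · obtain ⟨hg', hc'⟩ := hF R' (Finset.mem_insert_of_mem hR'F)
        have := Finset.eq_of_subset_of_card_le (hRsub R' hg' hsub) (by omega)
        exact hRF (this ▸ hR'F)
    obtain ⟨d''⟩ := d'.extend hp R k' hk'
      ⟨a, haR, Fin.lt_def.mpr (by omega)⟩ ⟨b, hbR, Fin.lt_def.mpr (by omega)⟩ h3' h4 h5
    refine ⟨d''.ofIff (fun S => ?_)⟩
    constructor
    · rintro ((hq | ⟨R', hR'F, hsub⟩) | hsub)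
      · exact Or.inl hq
      · exact Or.inr ⟨R', Finset.mem_insert_of_mem hR'F, hsub⟩
      · exact Or.inr ⟨R, Finset.mem_insert_self R F, hsub⟩
    · rintro (hq | ⟨R', hR'F, hsub⟩)
      · exact Or.inl (Or.inl hq)
      · rcases Finset.mem_insert.mp hR'F with rfl | h
        · exact Or.inr hsub
        · exact Or.inl (Or.inr ⟨R', h, hsub⟩)

lemma stepB (hp : ∀ (m : ℕ) (k : Fin (m + 1)), 0 < (k : ℕ) → (k : ℕ) < m →
      HasLiftingProperty (SSet.horn m k).ι p)
    (M : ℕ) (d : PLift p u v (PM M)) (c : ℕ) :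
    Nonempty (PLift p u v (QB M c)) := by
  classical
  induction c with
  | zero =>
    refine ⟨d.ofIff (fun S => ?_)⟩
    constructor
    · exact fun h => Or.inl h
    · rintro (h | ⟨R, hg, hc, -⟩)
      · exact h
      · exact absurd hc (by have := good_card hg; omega)
  | succ c ih =>
    obtain ⟨d'⟩ := ih
    obtain ⟨d''⟩ := stepC hp M c d'
      (Finset.univ.filter (fun R => good M R ∧ R.card = c + 1))
      (fun R hR => (Finset.mem_filter.mp hR).2)
    refine ⟨d''.ofIff (fun S => ?_)⟩
    constructor
    · rintro ((h | ⟨R, hg, hc, hsub⟩) | ⟨R, hRF, hsub⟩)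
      · exact Or.inl h
      · exact Or.inr ⟨R, hg, by omega, hsub⟩
      · obtain ⟨-, hg, hc⟩ := Finset.mem_filter.mp hRF
        exact Or.inr ⟨R, hg, by omega, hsub⟩
    · rintro (h | ⟨R, hg, hc, hsub⟩)
      · exact Or.inl (Or.inl h)
      · rcases Nat.lt_or_ge R.card (c + 1) with h' | h'
        · exact Or.inl (Or.inr ⟨R, hg, by omega, hsub⟩)
        · exact Or.inr ⟨R, Finset.mem_filter.mpr ⟨Finset.mem_univ R, hg, by omega⟩, hsub⟩

lemma stepA (hp : ∀ (m : ℕ) (k : Fin (m + 1)), 0 < (k : ℕ) → (k : ℕ) < m →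
      HasLiftingProperty (SSet.horn m k).ι p)
    (hsq : u ≫ p = spineSubcomplexInclusion n ≫ v) (M : ℕ) :
    Nonempty (PLift p u v (PM M)) := by
  classical
  induction M with
  | zero =>
    refine ⟨(plBase hsq).ofIff (fun S => ?_)⟩
    constructor
    · exact fun h => Or.inl h
    · rintro (h | h)
      · exact h
      · exact ⟨0, fun b hb => by have := h b hb; omega⟩
  | succ M ih =>
    obtain ⟨d⟩ := ih
    obtain ⟨d'⟩ := stepB hp M d (n + 2)
    refine ⟨d'.ofIff (fun S => ?_)⟩
    constructor
    · rintro ((h | h) | ⟨R, ⟨hle, -, -, -⟩, -, hsub⟩)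
      · exact Or.inl h
      · exact Or.inr (fun x hx => by have := h x hx; omega)
      · exact Or.inr (fun x hx => hle x (hsub hx))
    · rintro (h | h)
      · exact Or.inl (Or.inl h)
      · rcases Nat.lt_or_ge n (M + 1) with hMn | hMn
        · refine Or.inl (Or.inr (fun x hx => ?_))
          have := x.isLt
          have := h x hx
          omega
        · rcases Nat.eq_zero_or_pos M with rfl | hM
          · exact Or.inl (Or.inl ⟨0, fun b hb => by have := h b hb; omega⟩)
          · refine Or.inr ⟨Finset.univ.filter (fun x => (x : ℕ) ≤ M + 1),
              ⟨?_, ⟨⟨0, by omega⟩, ?_, by simpa using hM⟩,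
                ⟨⟨M, by omega⟩, ?_, rfl⟩, ⟨⟨M + 1, by omega⟩, ?_, rfl⟩⟩, ?_, ?_⟩
            · exact fun z hz => (Finset.mem_filter.mp hz).2
            · exact Finset.mem_filter.mpr ⟨Finset.mem_univ _, by simp⟩
            · exact Finset.mem_filter.mpr ⟨Finset.mem_univ _, by simp⟩
            · exact Finset.mem_filter.mpr ⟨Finset.mem_univ _, by simp⟩
            · exact le_trans (Finset.card_filter_le _ _) (by simp)
            · exact fun x hx => Finset.mem_filter.mpr ⟨Finset.mem_univ _, h x hx⟩

end IND
section FIN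
open SSet
variable {n : ℕ}

lemma part1 {E B : SSet.{u}} (p : E ⟶ B)
    (hp : ∀ (m : ℕ) (k : Fin (m + 1)), 0 < (k : ℕ) → (k : ℕ) < m →
      HasLiftingProperty (SSet.horn m k).ι p) :
    HasLiftingProperty (SSet.spineSubcomplexInclusion.{u} n) p := by
  constructor
  intro f g sq
  obtain ⟨d⟩ := stepA (u := f) (v := g) hp sq.w n
  have htop : ∀ S : Finset (Fin (n+1)), PM n S :=
    fun S => Or.inr (fun x _ => Nat.lt_succ_iff.mp x.isLt)
  refine CommSq.HasLift.mk' ⟨{ app := fun l => TypeCat.ofHom fun α => d.ell α (htop _), naturality := ?_ }, ?_, ?_⟩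
  · intro l l' φ
    ext α
    exact d.nat φ α (htop _) (htop _)
  · apply SSet.hom_ext
    intro l
    ext x
    exact d.ext x.1 x.2 (htop _)
  · apply SSet.hom_ext
    intro l
    ext α
    exact d.overB α (htop _)

lemma delta0_subsingleton {l : SimplexCategoryᵒᵖ} (a b : Δ[0].obj l) : a = b :=
  simplex_ext (fun x => Fin.ext (by omega))

def toDelta0 (Y : SSet.{u}) : Y ⟶ Δ[0] where
  app l := TypeCat.ofHom fun _ => SSet.stdSimplex.const 0 0 l
  naturality := by
    intro l l' f
    ext y
    exact delta0_subsingleton _ _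

lemma part2 (X : SSet.{u}) [SSet.Quasicategory X] (f : SSet.spineSubcomplex.{u} n ⟶ X) :
    ∃ g : Δ[n] ⟶ X, SSet.spineSubcomplexInclusion n ≫ g = f := by
  have hp : ∀ (m : ℕ) (k : Fin (m + 1)), 0 < (k : ℕ) → (k : ℕ) < m →
      HasLiftingProperty (SSet.horn m k).ι (toDelta0 X) := by
    intro m k h0 hm
    constructor
    intro f' g' sq'
    obtain ⟨σ', hσ'⟩ := SSet.Quasicategory.hornFilling (n := m) (i := k)
      (by rwa [Fin.lt_def]) (by rwa [Fin.lt_def, Fin.val_last]) f'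
    refine CommSq.HasLift.mk' ⟨σ', hσ'.symm, ?_⟩
    apply SSet.hom_ext
    intro l
    ext x
    exact delta0_subsingleton _ _
  have sq : CommSq f (SSet.spineSubcomplexInclusion n) (toDelta0 X) (toDelta0 Δ[n]) := by
    constructor
    apply SSet.hom_ext
    intro l
    ext x
    exact delta0_subsingleton _ _
  haveI := part1 (n := n) (toDelta0 X) hp
  haveI : sq.HasLift := HasLiftingProperty.sq_hasLift sq
  exact ⟨sq.lift, sq.fac_left⟩

end FIN



end SpineProof

/-- The inclusion of the spine `Sp(n) → Δ[n]` is inner anodyne, i.e. it lies in the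
saturation of the inner horn inclusions: it has the left lifting property with respect
to every morphism of simplicial sets having the right lifting property with respect to
all inner horn inclusions `Λ[m,k] → Δ[m]` (`0 < k < m`).  In particular, every
quasi-category `X` has the right lifting property with respect to `Sp(n) → Δ[n]`:
every map `Sp(n) ⟶ X` extends to `Δ[n] ⟶ X`. -/

theorem spine_inclusion_innerAnodyne (n : ℕ) :
    (∀ {E B : SSet.{u}} (p : E ⟶ B),
        (∀ (m : ℕ) (k : Fin (m + 1)), 0 < (k : ℕ) → (k : ℕ) < m →
          HasLiftingProperty (SSet.horn m k).ι p) →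
        HasLiftingProperty (SSet.spineSubcomplexInclusion.{u} n) p) ∧
    (∀ (X : SSet.{u}) [SSet.Quasicategory X] (f : SSet.spineSubcomplex.{u} n ⟶ X),
        ∃ g : Δ[n] ⟶ X, SSet.spineSubcomplexInclusion n ≫ g = f) := by
  exact ⟨fun {E B} p hp => SpineProof.part1 p hp, fun X _ f => SpineProof.part2 X f⟩
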